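/- Let n, m ≥ 0 and k > 0 be integers. Then the expression F(n,m,k) = (k / ((2n+k)(2m+k))) · Σ_{d | gcd(2n+k, n, m)} φ(d) · C((2n+k)/d, n/d) · C((2m+k)/d, m/d) is a positive integer. -/

import Mathlib

set_option linter.unusedSectionVars false

open Finset

namespace AnnAux

variable {ν q : ℕ}

variable {ν k : ℕ}

/-- Shift a subset of `ZMod ν` by `i`. -/
def sh (i : ZMod ν) (A : Finset (ZMod ν)) : Finset (ZMod ν) := A.image (· + i)

lemma mem_sh {i : ZMod ν} {A : Finset (ZMod ν)} {x : ZMod ν} :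
    x ∈ sh i A ↔ x - i ∈ A := by
  simp only [sh, Finset.mem_image]
  constructor
  · rintro ⟨a, ha, rfl⟩; simpa using ha
  · intro h; exact ⟨x - i, h, by ring⟩

lemma card_sh (i : ZMod ν) (A : Finset (ZMod ν)) : (sh i A).card = A.card :=
  Finset.card_image_of_injective _ (add_left_injective i)

lemma sh_zero (A : Finset (ZMod ν)) : sh (0 : ZMod ν) A = A := by
  simp [sh]

lemma sh_sh (i i' : ZMod ν) (A : Finset (ZMod ν)) : sh i (sh i' A) = sh (i + i') A := by
  ext x
  simp [mem_sh, sub_sub]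

lemma inv_add {i i' : ZMod ν} {A : Finset (ZMod ν)} (h : sh i A = A) (h' : sh i' A = A) :
    sh (i + i') A = A := by rw [← sh_sh, h', h]

lemma inv_neg {i : ZMod ν} {A : Finset (ZMod ν)} (h : sh i A = A) : sh (-i) A = A := by
  conv_lhs => rw [← h]
  rw [sh_sh, neg_add_cancel, sh_zero]

lemma inv_nsmul {i : ZMod ν} {A : Finset (ZMod ν)} (h : sh i A = A) (c : ℕ) :
    sh (c • i) A = A := by
  induction c with
  | zero => simpa using sh_zero A
  | succ c ih => rw [succ_nsmul]; exact inv_add ih h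

lemma inv_zsmul {i : ZMod ν} {A : Finset (ZMod ν)} (h : sh i A = A) (c : ℤ) :
    sh (c • i) A = A := by
  induction c using Int.rec with
  | ofNat c => simpa using inv_nsmul h c
  | negSucc c =>
    rw [negSucc_zsmul]
    exact inv_neg (inv_nsmul h (c + 1))

lemma mem_of_inv {i : ZMod ν} {A : Finset (ZMod ν)} (h : sh i A = A) {x : ZMod ν} :
    x + i ∈ A ↔ x ∈ A := by
  conv_lhs => rw [← h]
  simp [mem_sh]

variable {ν k : ℕ}
/-- number of `s < a` with `-s ∈ A`. -/
def cnt (ν a : ℕ) (A : Finset (ZMod ν)) : ℕ :=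
  ((Finset.range a).filter fun s : ℕ => -(s : ZMod ν) ∈ A).card

lemma cnt_zero (A : Finset (ZMod ν)) : cnt ν 0 A = 0 := by simp [cnt]

lemma cnt_succ (a : ℕ) (A : Finset (ZMod ν)) :
    cnt ν (a + 1) A = cnt ν a A + (if -(a : ZMod ν) ∈ A then 1 else 0) := by
  unfold cnt
  rw [Finset.range_add_one, Finset.filter_insert]
  split <;> simp [Finset.card_insert_of_notMem]

lemma cnt_add (a b : ℕ) (A : Finset (ZMod ν)) :
    cnt ν (a + b) A = cnt ν a A + cnt ν b (sh (a : ZMod ν) A) := by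
  induction b with
  | zero => simp [cnt_zero]
  | succ b ih =>
    rw [← Nat.add_assoc, cnt_succ, ih, cnt_succ, Nat.add_assoc]
    congr 2
    have : -((b : ℕ) : ZMod ν) ∈ sh (a : ZMod ν) A ↔ -(((a + b : ℕ) : ZMod ν)) ∈ A := by
      rw [mem_sh]; push_cast; ring_nf
    simp only [this]

lemma cnt_self [NeZero ν] (A : Finset (ZMod ν)) : cnt ν ν A = A.card := by
  unfold cnt
  refine Finset.card_bij (fun s _ => -(s : ZMod ν)) ?_ ?_ ?_
  · intro s hs; exact (Finset.mem_filter.mp hs).2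
  · intro s hs s' hs' h
    have h2 : ((s : ZMod ν)) = (s' : ZMod ν) := by
      have := neg_injective h; exact this
    have hs1 := Finset.mem_range.mp (Finset.mem_filter.mp hs).1
    have hs2 := Finset.mem_range.mp (Finset.mem_filter.mp hs').1
    rwa [ZMod.natCast_eq_natCast_iff, Nat.ModEq, Nat.mod_eq_of_lt hs1, Nat.mod_eq_of_lt hs2] at h2
  · intro a ha
    refine ⟨(-a).val, Finset.mem_filter.mpr ⟨Finset.mem_range.mpr (ZMod.val_lt (-a)), ?_⟩, ?_⟩
    · show -(((-a).val : ℕ) : ZMod ν) ∈ A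
      rw [ZMod.natCast_zmod_val]; simpa using ha
    · show -(((-a).val : ℕ) : ZMod ν) = a
      rw [ZMod.natCast_zmod_val]; simp

/-- weight of a window of length `a`, valued in `ZMod k`. -/
def W (k ν a : ℕ) (A : Finset (ZMod ν)) : ZMod k :=
  (a : ZMod k) - 2 * (cnt ν a A : ZMod k)

lemma W_zero (A : Finset (ZMod ν)) : W k ν 0 A = 0 := by simp [W, cnt_zero]

lemma W_add (a b : ℕ) (A : Finset (ZMod ν)) :
    W k ν (a + b) A = W k ν a A + W k ν b (sh (a : ZMod ν) A) := by
  unfold W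
  rw [cnt_add]
  push_cast
  ring

lemma card_sh' (i : ZMod ν) (A : Finset (ZMod ν)) : (sh i A).card = A.card :=
  Finset.card_image_of_injective _ (add_left_injective i)

lemma W_cycle [NeZero ν] {c : ℕ} (hν : ν = 2 * c + k) {A : Finset (ZMod ν)}
    (hA : A.card = c) : W k ν ν A = 0 := by
  unfold W
  rw [cnt_self, hA, hν]
  push_cast
  rw [ZMod.natCast_self]
  ring

lemma W_mod [NeZero ν] {c : ℕ} (hν : ν = 2 * c + k) {A : Finset (ZMod ν)}
    (hA : A.card = c) (a : ℕ) : W k ν (a % ν) A = W k ν a A := by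
  conv_rhs => rw [← Nat.mod_add_div a ν]
  generalize a / ν = t
  induction t with
  | zero => simp
  | succ t ih =>
    rw [Nat.mul_succ, ← Nat.add_assoc, W_add,
      W_cycle hν (by rw [card_sh']; exact hA), add_zero]
    exact ih

variable {ν q : ℕ}

section orderFacts
variable [NeZero ν] (i : ZMod ν)

lemma ord_dvd : addOrderOf i ∣ ν := by
  have := addOrderOf_dvd_card (x := i)
  rwa [ZMod.card] at this

lemma ord_pos : 0 < addOrderOf i := addOrderOf_pos i

lemma gcd_val : Nat.gcd ν i.val = ν / addOrderOf i := by
  have h := ZMod.addOrderOf_coe i.val (NeZero.ne ν)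
  rw [ZMod.natCast_zmod_val] at h
  rw [h, Nat.div_div_self (Nat.gcd_dvd_left _ _) (NeZero.ne ν)]

lemma q_dvd_val : (ν / addOrderOf i) ∣ i.val := by
  rw [← gcd_val]; exact Nat.gcd_dvd_right ν i.val

lemma q_pos : 0 < ν / addOrderOf i := by
  rw [← gcd_val]
  exact Nat.gcd_pos_of_pos_left _ (Nat.pos_of_ne_zero (NeZero.ne ν))

lemma nu_eq : ν = addOrderOf i * (ν / addOrderOf i) := (Nat.mul_div_cancel' (ord_dvd i)).symm

lemma u_lt : i.val / (ν / addOrderOf i) < addOrderOf i := by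
  rw [Nat.div_lt_iff_lt_mul (q_pos i), mul_comm, Nat.div_mul_cancel (ord_dvd i)]
  exact ZMod.val_lt i

lemma coprime_aux {q d u : ℕ} (hq : 0 < q) (h : Nat.gcd (q * d) (q * u) = q) :
    Nat.Coprime u d := by
  rw [Nat.gcd_mul_left] at h
  have h1 : Nat.gcd d u = 1 := Nat.eq_of_mul_eq_mul_left hq (by rw [mul_one]; exact h)
  exact Nat.coprime_comm.mp h1

lemma u_coprime : Nat.Coprime (i.val / (ν / addOrderOf i)) (addOrderOf i) := by
  have hval : i.val = (ν / addOrderOf i) * (i.val / (ν / addOrderOf i)) :=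
    (Nat.mul_div_cancel' (q_dvd_val i)).symm
  have hν : ν = (ν / addOrderOf i) * addOrderOf i := (Nat.div_mul_cancel (ord_dvd i)).symm
  refine coprime_aux (q_pos i) ?_
  rw [← hν, ← hval]
  exact gcd_val i

lemma inv_q {A : Finset (ZMod ν)} (h : sh i A = A) :
    sh (((ν / addOrderOf i : ℕ) : ZMod ν)) A = A := by
  have hg : ((ν / addOrderOf i : ℕ) : ZMod ν) = (Nat.gcdB ν i.val) • i := by
    rw [← gcd_val i]
    have hb := Nat.gcd_eq_gcd_ab ν i.val
    calc ((Nat.gcd ν i.val : ℕ) : ZMod ν) = (((Nat.gcd ν i.val : ℤ)) : ZMod ν) := by push_cast; rfl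
      _ = ((ν * Nat.gcdA ν i.val + i.val * Nat.gcdB ν i.val : ℤ) : ZMod ν) := by rw [← hb]
      _ = (Nat.gcdB ν i.val) • i := by
          push_cast
          rw [ZMod.natCast_self, ZMod.natCast_zmod_val, zsmul_eq_mul]
          ring
  rw [hg]
  exact inv_zsmul h _

end orderFacts

section fibers
variable [NeZero ν] [NeZero q]

lemma cast_mod_dvd (hq : q ∣ ν) (a : ℕ) : ((a % ν : ℕ) : ZMod q) = (a : ZMod q) := by
  conv_rhs => rw [← Nat.mod_add_div a ν]
  push_cast
  rw [(ZMod.natCast_eq_zero_iff ν q).mpr hq]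
  ring

lemma pi_add (hq : q ∣ ν) (x y : ZMod ν) :
    (((x + y).val : ℕ) : ZMod q) = (x.val : ZMod q) + (y.val : ZMod q) := by
  rw [ZMod.val_add, cast_mod_dvd hq]
  push_cast
  ring

lemma card_fiber {d : ℕ} (hν : ν = d * q) (y : ZMod q) :
    ((univ : Finset (ZMod ν)).filter fun x => (x.val : ZMod q) = y).card = d := by
  have q0 : 0 < q := Nat.pos_of_ne_zero (NeZero.ne q)
  have hcard : ((Finset.range d)).card = d := Finset.card_range d
  rw [← hcard]
  refine Finset.card_nbij' (fun x => x.val / q) (fun t => ((y.val + q * t : ℕ) : ZMod ν)) ?_ ?_ ?_ ?_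
  · intro x _
    rw [Finset.mem_coe, Finset.mem_range, Nat.div_lt_iff_lt_mul q0, ← hν]
    exact ZMod.val_lt x
  · intro t ht
    rw [Finset.mem_coe, Finset.mem_range] at ht
    have hlt : y.val + q * t < ν := by
      calc y.val + q * t < q + q * t := by
            exact Nat.add_lt_add_right (ZMod.val_lt y) _
        _ = q * (t + 1) := by ring
        _ ≤ q * d := Nat.mul_le_mul_left q ht
        _ = ν := by rw [hν, mul_comm]
    simp only [Finset.mem_coe, Finset.mem_filter, Finset.mem_univ, true_and]
    rw [ZMod.val_natCast, Nat.mod_eq_of_lt hlt]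
    push_cast
    rw [ZMod.natCast_self, ZMod.natCast_zmod_val]
    ring
  · intro x hx
    simp only [Finset.mem_coe, Finset.mem_filter, Finset.mem_univ, true_and] at hx
    have hyv : y.val = x.val % q := by rw [← hx, ZMod.val_natCast]
    show ((y.val + q * (x.val / q) : ℕ) : ZMod ν) = x
    rw [hyv, Nat.mod_add_div, ZMod.natCast_zmod_val]
  · intro t ht
    rw [Finset.mem_coe, Finset.mem_range] at ht
    have hlt : y.val + q * t < ν := by
      calc y.val + q * t < q + q * t := Nat.add_lt_add_right (ZMod.val_lt y) _
        _ = q * (t + 1) := by ring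
        _ ≤ q * d := Nat.mul_le_mul_left q ht
        _ = ν := by rw [hν, mul_comm]
    show ((y.val + q * t : ℕ) : ZMod ν).val / q = t
    rw [ZMod.val_natCast, Nat.mod_eq_of_lt hlt, Nat.add_mul_div_left _ _ q0,
      Nat.div_eq_of_lt (ZMod.val_lt y), Nat.zero_add]

end fibers
variable {ν : ℕ}

-- main counting lemma
lemma card_invSets [NeZero ν] (i : ZMod ν) (c : ℕ) :
    ((univ : Finset (Finset (ZMod ν))).filter fun A => A.card = c ∧ sh i A = A).card =
      if addOrderOf i ∣ c then (ν / addOrderOf i).choose (c / addOrderOf i) else 0 := by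
  set d := addOrderOf i with hddef
  set q := ν / d with hqdef
  haveI : NeZero q := ⟨(q_pos i).ne'⟩
  have hqν : q ∣ ν := Nat.div_dvd_of_dvd (ord_dvd i)
  have hνdq : ν = d * q := nu_eq i
  have hd0 : 0 < d := ord_pos i
  have q0 : 0 < q := q_pos i
  set Φ : Finset (ZMod ν) → Finset (ZMod q) := fun A => A.image (fun x => (x.val : ZMod q))
    with hΦ
  set Ψ : Finset (ZMod q) → Finset (ZMod ν) :=
    fun S => univ.filter (fun x => (x.val : ZMod q) ∈ S) with hΨ
  -- closure of invariant sets within fibers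
  have key : ∀ A : Finset (ZMod ν), sh i A = A → ∀ x y : ZMod ν, x ∈ A →
      (y.val : ZMod q) = (x.val : ZMod q) → y ∈ A := by
    intro A hA x y hx hxy
    have hz : ((y - x).val : ZMod q) = 0 := by
      have := pi_add (ν := ν) hqν x (y - x)
      rw [add_sub_cancel] at this
      rw [hxy] at this
      have h2 : (x.val : ZMod q) = (x.val : ZMod q) + ((y - x).val : ZMod q) := this
      linear_combination h2.symm
    have hdvd : q ∣ (y - x).val := (ZMod.natCast_eq_zero_iff _ _).mp hz
    set t := (y - x).val / q with htdef
    have hyx : y - x = t • ((q : ℕ) : ZMod ν) := by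
      have h1 : (y - x) = (((y - x).val : ℕ) : ZMod ν) := (ZMod.natCast_zmod_val _).symm
      rw [h1, ← Nat.mul_div_cancel' hdvd, ← htdef]
      push_cast
      rw [nsmul_eq_mul]
      ring
    have hinvt : sh (t • ((q : ℕ) : ZMod ν)) A = A := inv_nsmul (inv_q i hA) t
    have := (mem_of_inv hinvt (x := x)).mpr hx
    rwa [← hyx, add_sub_cancel] at this
  have hΨΦ : ∀ A : Finset (ZMod ν), sh i A = A → Ψ (Φ A) = A := by
    intro A hA
    ext x
    simp only [hΨ, hΦ, Finset.mem_filter, Finset.mem_univ, true_and, Finset.mem_image]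
    constructor
    · rintro ⟨x', hx', hpi⟩
      exact key A hA x' x hx' hpi.symm
    · intro hx; exact ⟨x, hx, rfl⟩
  have hΨinv : ∀ S : Finset (ZMod q), sh i (Ψ S) = Ψ S := by
    intro S
    ext x
    rw [mem_sh]
    simp only [hΨ, Finset.mem_filter, Finset.mem_univ, true_and]
    have : (((x - i) + i).val : ZMod q) = ((x - i).val : ZMod q) + (i.val : ZMod q) :=
      pi_add hqν _ _
    rw [sub_add_cancel] at this
    rw [this, (ZMod.natCast_eq_zero_iff _ _).mpr (q_dvd_val i), add_zero]
  have hΨcard : ∀ S : Finset (ZMod q), (Ψ S).card = d * S.card := by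
    intro S
    rw [Finset.card_eq_sum_card_fiberwise (f := fun x => (x.val : ZMod q)) (t := S)
      (by intro x hx; simp only [hΨ, Finset.mem_coe, Finset.mem_filter] at hx; exact hx.2)]
    have : ∀ y ∈ S, ((Ψ S).filter fun x => (x.val : ZMod q) = y).card = d := by
      intro y hy
      have hset : ((Ψ S).filter fun x => (x.val : ZMod q) = y)
          = (univ.filter fun x : ZMod ν => (x.val : ZMod q) = y) := by
        ext x
        simp only [hΨ, Finset.mem_filter, Finset.mem_univ, true_and, Finset.filter_filter]
        constructor
        · rintro ⟨_, h2⟩; exact h2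
        · intro h; exact ⟨by rw [h]; exact hy, h⟩
      rw [hset, card_fiber hνdq]
    rw [Finset.sum_congr rfl this, Finset.sum_const, smul_eq_mul, mul_comm]
  have hΦΨ : ∀ S : Finset (ZMod q), Φ (Ψ S) = S := by
    intro S
    ext y
    simp only [hΦ, hΨ, Finset.mem_image, Finset.mem_filter, Finset.mem_univ, true_and]
    constructor
    · rintro ⟨x, hx, rfl⟩; exact hx
    · intro hy
      refine ⟨((y.val : ℕ) : ZMod ν), ?_, ?_⟩
      · have : (((y.val : ℕ) : ZMod ν).val : ZMod q) = y := by
          rw [ZMod.val_natCast, cast_mod_dvd hqν, ZMod.natCast_zmod_val]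
        rw [this]; exact hy
      · rw [ZMod.val_natCast, cast_mod_dvd hqν, ZMod.natCast_zmod_val]
  by_cases hdc : d ∣ c
  · rw [if_pos hdc]
    have hbij : ((univ : Finset (Finset (ZMod ν))).filter fun A => A.card = c ∧ sh i A = A).card
        = ((univ : Finset (Finset (ZMod q))).filter fun S => S.card = c / d).card := by
      refine Finset.card_nbij' Φ Ψ ?_ ?_ ?_ ?_
      · intro A hA
        simp only [Finset.mem_coe, Finset.mem_filter, Finset.mem_univ, true_and] at hA ⊢
        obtain ⟨hcard, hinv⟩ := hA
        have h1 : A.card = d * (Φ A).card := by rw [← hΨΦ A hinv, hΨcard]; rw [hΨΦ A hinv]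
        rw [hcard] at h1
        rw [h1, Nat.mul_div_cancel_left _ hd0]
      · intro S hS
        simp only [Finset.mem_coe, Finset.mem_filter, Finset.mem_univ, true_and] at hS ⊢
        refine ⟨?_, hΨinv S⟩
        rw [hΨcard, hS, Nat.mul_div_cancel' hdc]
      · intro A hA
        simp only [Finset.mem_coe, Finset.mem_filter, Finset.mem_univ, true_and] at hA
        exact hΨΦ A hA.2
      · intro S _
        exact hΦΨ S
    rw [hbij]
    have h2 : (univ : Finset (Finset (ZMod q))).filter (fun S => S.card = c / d)
        = Finset.powersetCard (c / d) (univ : Finset (ZMod q)) := by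
      rw [Finset.powersetCard_eq_filter, Finset.powerset_univ]
    rw [h2, Finset.card_powersetCard, Finset.card_univ, ZMod.card]
  · rw [if_neg hdc]
    rw [Finset.card_eq_zero, Finset.filter_eq_empty_iff]
    intro A _
    rintro ⟨hcard, hinv⟩
    apply hdc
    refine ⟨(Φ A).card, ?_⟩
    rw [← hcard]
    conv_lhs => rw [← hΨΦ A hinv]
    rw [hΨcard]

variable {ν : ℕ}

section weights
variable [NeZero ν] (i : ZMod ν) {A : Finset (ZMod ν)}

lemma cnt_window (hinv : sh i A = A) (t : ℕ) :
    cnt ν ((ν / addOrderOf i) * t) A = t * cnt ν (ν / addOrderOf i) A := by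
  induction t with
  | zero => simp [cnt_zero]
  | succ t ih =>
    have h1 : (ν / addOrderOf i) * (t + 1) = (ν / addOrderOf i) * t + (ν / addOrderOf i) := by
      ring
    rw [h1, cnt_add, ih]
    have hsh : sh ((((ν / addOrderOf i) * t : ℕ)) : ZMod ν) A = A := by
      have h2 : ((((ν / addOrderOf i) * t : ℕ)) : ZMod ν)
          = t • (((ν / addOrderOf i : ℕ)) : ZMod ν) := by
        push_cast
        rw [nsmul_eq_mul]
        ring
      rw [h2]
      exact inv_nsmul (inv_q i hinv) t
    rw [hsh]
    ring

lemma card_eq_ord_mul (hinv : sh i A = A) :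
    A.card = addOrderOf i * cnt ν (ν / addOrderOf i) A := by
  have h1 := cnt_window i hinv (addOrderOf i)
  rw [mul_comm (ν / addOrderOf i) (addOrderOf i), ← nu_eq i, cnt_self] at h1
  rw [h1, mul_comm]

lemma ord_dvd_card (hinv : sh i A = A) : addOrderOf i ∣ A.card :=
  ⟨_, card_eq_ord_mul i hinv⟩

lemma W_invariant {k c : ℕ} (hν : ν = 2 * c + k) (hA : A.card = c) (hinv : sh i A = A) :
    W k ν i.val A = ((k / addOrderOf i * (i.val / (ν / addOrderOf i)) : ℕ) : ZMod k) := by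
  set d := addOrderOf i with hddef
  set q := ν / d with hqdef
  set u := i.val / q with hudef
  have hd0 : 0 < d := ord_pos i
  have hdc : d ∣ c := by rw [← hA]; exact ord_dvd_card i hinv
  have hdk : d ∣ k := by
    have h2c : d ∣ 2 * c := Dvd.dvd.mul_left hdc 2
    have hdν : d ∣ 2 * c + k := by rw [← hν]; exact ord_dvd i
    exact (Nat.dvd_add_right h2c).mp hdν
  have hcq : cnt ν q A = c / d := by
    have h1 := card_eq_ord_mul i hinv
    rw [hA] at h1
    rw [h1, Nat.mul_div_cancel_left _ hd0]
  have hq2 : q = 2 * (c / d) + k / d := by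
    apply Nat.eq_of_mul_eq_mul_left hd0
    rw [← nu_eq i, hν, Nat.mul_add, Nat.mul_left_comm, Nat.mul_div_cancel' hdc,
      Nat.mul_div_cancel' hdk]
  have hval : i.val = q * u := (Nat.mul_div_cancel' (q_dvd_val i)).symm
  have hcnt : cnt ν i.val A = u * (c / d) := by
    rw [hval, cnt_window i hinv, hcq]
  show (i.val : ZMod k) - 2 * (cnt ν i.val A : ZMod k) = _
  rw [hcnt, hval, hq2]
  push_cast
  ring

end weights

lemma cst_injective {k d1 d2 u v : ℕ} (hk : 0 < k) (h1 : d1 ∣ k) (h2 : d2 ∣ k)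
    (hu : u < d1) (hv : v < d2) (hcu : Nat.Coprime u d1) (hcv : Nat.Coprime v d2)
    (h : ((k / d1 * u : ℕ) : ZMod k) = ((k / d2 * v : ℕ) : ZMod k)) : d1 = d2 ∧ u = v := by
  have hmod : (k / d1 * u) ≡ (k / d2 * v) [MOD k] := (ZMod.natCast_eq_natCast_iff _ _ _).mp h
  have hgcd : Nat.gcd k (k / d1 * u) = Nat.gcd k (k / d2 * v) := by
    rw [Nat.gcd_rec k (k / d1 * u), Nat.gcd_rec k (k / d2 * v), hmod]
  have e1 : Nat.gcd k (k / d1 * u) = k / d1 := by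
    have h4 : Nat.gcd ((k / d1) * d1) ((k / d1) * u) = (k / d1) * Nat.gcd d1 u :=
      Nat.gcd_mul_left _ _ _
    rw [Nat.div_mul_cancel h1] at h4
    rw [h4, Nat.coprime_comm.mp hcu, mul_one]
  have e2 : Nat.gcd k (k / d2 * v) = k / d2 := by
    have h4 : Nat.gcd ((k / d2) * d2) ((k / d2) * v) = (k / d2) * Nat.gcd d2 v :=
      Nat.gcd_mul_left _ _ _
    rw [Nat.div_mul_cancel h2] at h4
    rw [h4, Nat.coprime_comm.mp hcv, mul_one]
  have hdd : k / d1 = k / d2 := by rw [← e1, hgcd, e2]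
  have hd12 : d1 = d2 := by
    have h3 := Nat.div_div_self h1 hk.ne'
    rw [← h3, hdd, Nat.div_div_self h2 hk.ne']
  subst hd12
  refine ⟨rfl, ?_⟩
  have hq0 : (k / d1) ≠ 0 := by
    have hd1 : 0 < d1 := by
      rcases Nat.eq_zero_or_pos d1 with h0 | h0
      · subst h0; simp at h1; omega
      · exact h0
    exact (Nat.div_pos (Nat.le_of_dvd hk h1) hd1).ne'
  have hcan : u ≡ v [MOD d1] := by
    refine Nat.ModEq.mul_left_cancel' hq0 ?_
    rw [Nat.div_mul_cancel h1]
    exact hmod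
  have := hcan
  unfold Nat.ModEq at this
  rwa [Nat.mod_eq_of_lt hu, Nat.mod_eq_of_lt hv] at this

lemma j0_facts {μ d u : ℕ} [NeZero μ] (hd : d ∣ μ) (hd0 : 0 < d) (hu : u < d)
    (hcop : Nat.Coprime u d) :
    addOrderOf (((u * (μ / d) : ℕ)) : ZMod μ) = d ∧
      (((u * (μ / d) : ℕ)) : ZMod μ).val = u * (μ / d) := by
  have hq0 : 0 < μ / d := Nat.div_pos (Nat.le_of_dvd (Nat.pos_of_ne_zero (NeZero.ne μ)) hd) hd0
  have hlt : u * (μ / d) < μ := by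
    calc u * (μ / d) < d * (μ / d) := by
          exact (Nat.mul_lt_mul_right hq0).mpr hu
      _ = μ := Nat.mul_div_cancel' hd
  constructor
  · rw [ZMod.addOrderOf_coe _ (NeZero.ne μ)]
    have hgcd : Nat.gcd μ (u * (μ / d)) = μ / d := by
      have h4 : Nat.gcd ((μ / d) * d) ((μ / d) * u) = (μ / d) * Nat.gcd d u :=
        Nat.gcd_mul_left _ _ _
      rw [Nat.div_mul_cancel hd] at h4
      rw [mul_comm u (μ / d), h4, Nat.coprime_comm.mp hcop, mul_one]
    rw [hgcd, Nat.div_div_self hd (NeZero.ne μ)]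
  · rw [ZMod.val_natCast, Nat.mod_eq_of_lt hlt]


/-! ### The annular space and its action -/

section action

lemma W_vadd_add {ν c k : ℕ} [NeZero ν] (hν : ν = 2 * c + k) {A : Finset (ZMod ν)}
    (hA : A.card = c) (i i' : ZMod ν) :
    W k ν (i + i').val A = W k ν i'.val A + W k ν i.val (sh i' A) := by
  have h1 : W k ν ((i + i').val) A = W k ν (i'.val + i.val) A := by
    rw [ZMod.val_add, W_mod hν hA, add_comm]
  rw [h1, W_add, ZMod.natCast_zmod_val]

variable (n m k : ℕ)

instance instNZ (n k : ℕ) [NeZero k] : NeZero (2 * n + k) :=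
  ⟨by have := NeZero.ne k; omega⟩

/-- The annular configuration space. -/
abbrev Ann : Type :=
  {A : Finset (ZMod (2 * n + k)) // A.card = n} ×
    {B : Finset (ZMod (2 * m + k)) // B.card = m} × ZMod k

variable [NeZero k]

instance : AddAction (ZMod (2 * n + k) × ZMod (2 * m + k)) (Ann n m k) where
  vadd g x :=
    ⟨⟨sh g.1 x.1.1, by rw [card_sh, x.1.2]⟩,
     ⟨sh g.2 x.2.1.1, by rw [card_sh, x.2.1.2]⟩,
     x.2.2 + W k _ g.1.val x.1.1 - W k _ g.2.val x.2.1.1⟩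
  zero_vadd := by
    rintro ⟨⟨A, hA⟩, ⟨B, hB⟩, t⟩
    refine Prod.ext (Subtype.ext ?_) (Prod.ext (Subtype.ext ?_) ?_)
    · show sh 0 A = A
      exact sh_zero A
    · show sh 0 B = B
      exact sh_zero B
    · show t + W k _ (0 : ZMod (2 * n + k)).val A - W k _ (0 : ZMod (2 * m + k)).val B = t
      rw [ZMod.val_zero, ZMod.val_zero, W_zero, W_zero]
      ring
  add_vadd := by
    rintro ⟨i, j⟩ ⟨i', j'⟩ ⟨⟨A, hA⟩, ⟨B, hB⟩, t⟩
    refine Prod.ext (Subtype.ext ?_) (Prod.ext (Subtype.ext ?_) ?_)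
    · show sh (i + i') A = sh i (sh i' A)
      exact (sh_sh i i' A).symm
    · show sh (j + j') B = sh j (sh j' B)
      exact (sh_sh j j' B).symm
    · show t + W k _ (i + i').val A - W k _ (j + j').val B
        = (t + W k _ i'.val A - W k _ j'.val B) + W k _ i.val (sh i' A)
          - W k _ j.val (sh j' B)
      rw [W_vadd_add rfl hA, W_vadd_add rfl hB]
      ring

lemma vadd_eq_iff (g : ZMod (2 * n + k) × ZMod (2 * m + k)) (x : Ann n m k) :
    g +ᵥ x = x ↔ (sh g.1 x.1.1 = x.1.1 ∧ sh g.2 x.2.1.1 = x.2.1.1 ∧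
      W k (2 * n + k) g.1.val x.1.1 = W k (2 * m + k) g.2.val x.2.1.1) := by
  obtain ⟨⟨A, hA⟩, ⟨B, hB⟩, t⟩ := x
  constructor
  · intro h
    have h1 : sh g.1 A = A := congrArg (fun y : Ann n m k => y.1.1) h
    have h2 : sh g.2 B = B := congrArg (fun y : Ann n m k => y.2.1.1) h
    have h3 : t + W k _ g.1.val A - W k _ g.2.val B = t :=
      congrArg (fun y : Ann n m k => y.2.2) h
    refine ⟨h1, h2, ?_⟩
    have h4 : W k _ g.1.val A - W k _ g.2.val B = 0 := by linear_combination h3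
    linear_combination h4
  · rintro ⟨h1, h2, h3⟩
    refine Prod.ext (Subtype.ext ?_) (Prod.ext (Subtype.ext ?_) ?_)
    · exact h1
    · exact h2
    · show t + W k _ g.1.val A - W k _ g.2.val B = t
      rw [h3]
      ring

/-- canonical weight constant of a rotation. -/
noncomputable def cst (k : ℕ) {ν : ℕ} (i : ZMod ν) : ZMod k :=
  ((k / addOrderOf i * (i.val / (ν / addOrderOf i)) : ℕ) : ZMod k)

lemma sum_subtype_indicator {ν c : ℕ} [NeZero ν] (i : ZMod ν) :
    (∑ A : {A : Finset (ZMod ν) // A.card = c}, if sh i A.1 = A.1 then (1 : ℕ) else 0)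
      = ((univ : Finset (Finset (ZMod ν))).filter fun A => A.card = c ∧ sh i A = A).card := by
  classical
  rw [Finset.card_filter]
  rw [← Finset.sum_subtype ((univ : Finset (Finset (ZMod ν))).filter fun A => A.card = c)
      (by intro A; simp) (fun A => if sh i A = A then (1 : ℕ) else 0)]
  rw [Finset.sum_filter]
  apply Finset.sum_congr rfl
  intro A _
  by_cases h1 : A.card = c <;> by_cases h2 : sh i A = A <;> simp [h1, h2]

lemma card_fix (g : ZMod (2 * n + k) × ZMod (2 * m + k)) :
    Nat.card (AddAction.fixedBy (Ann n m k) g)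
      = ((univ : Finset (Finset (ZMod (2 * n + k)))).filter
            fun A => A.card = n ∧ sh g.1 A = A).card
        * (((univ : Finset (Finset (ZMod (2 * m + k)))).filter
            fun B => B.card = m ∧ sh g.2 B = B).card
          * (if cst k g.1 = cst k g.2 then k else 0)) := by
  classical
  have h0 : Nat.card (AddAction.fixedBy (Ann n m k) g)
      = ((univ : Finset (Ann n m k)).filter fun x => g +ᵥ x = x).card := by
    rw [Nat.card_eq_fintype_card]
    apply Fintype.card_of_subtype
    intro x
    simp [AddAction.mem_fixedBy]
  rw [h0, Finset.card_filter]
  have hsplit : (∑ x : Ann n m k, if g +ᵥ x = x then (1 : ℕ) else 0)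
      = ∑ A : {A : Finset (ZMod (2 * n + k)) // A.card = n},
          ∑ B : {B : Finset (ZMod (2 * m + k)) // B.card = m},
          ∑ t : ZMod k, if g +ᵥ (⟨A, B, t⟩ : Ann n m k) = ⟨A, B, t⟩ then (1 : ℕ) else 0 := by
    rw [Fintype.sum_prod_type]
    exact Finset.sum_congr rfl fun A _ => Fintype.sum_prod_type _
  rw [hsplit]
  have hAB : ∀ (A : {A : Finset (ZMod (2 * n + k)) // A.card = n})
      (B : {B : Finset (ZMod (2 * m + k)) // B.card = m}),
      (∑ t : ZMod k, if g +ᵥ (⟨A, B, t⟩ : Ann n m k) = ⟨A, B, t⟩ then (1 : ℕ) else 0)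
        = (if sh g.1 A.1 = A.1 then (1 : ℕ) else 0) *
            ((if sh g.2 B.1 = B.1 then (1 : ℕ) else 0) *
              (if cst k g.1 = cst k g.2 then k else 0)) := by
    intro A B
    have hcond : ∀ t : ZMod k, (g +ᵥ (⟨A, B, t⟩ : Ann n m k) = ⟨A, B, t⟩) ↔
        (sh g.1 A.1 = A.1 ∧ sh g.2 B.1 = B.1 ∧
          W k (2 * n + k) g.1.val A.1 = W k (2 * m + k) g.2.val B.1) := by
      intro t
      exact vadd_eq_iff n m k g ⟨A, B, t⟩
    simp only [hcond]
    rw [Finset.sum_const, Finset.card_univ, ZMod.card, smul_eq_mul]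
    by_cases h1 : sh g.1 A.1 = A.1
    · by_cases h2 : sh g.2 B.1 = B.1
      · have hw1 : W k (2 * n + k) g.1.val A.1 = cst k g.1 := W_invariant g.1 rfl A.2 h1
        have hw2 : W k (2 * m + k) g.2.val B.1 = cst k g.2 := W_invariant g.2 rfl B.2 h2
        rw [hw1, hw2]
        by_cases h3 : cst k g.1 = cst k g.2 <;> simp [h1, h2, h3]
      · simp [h2]
    · simp [h1]
  calc (∑ A : {A : Finset (ZMod (2 * n + k)) // A.card = n},
          ∑ B : {B : Finset (ZMod (2 * m + k)) // B.card = m},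
          ∑ t : ZMod k, if g +ᵥ (⟨A, B, t⟩ : Ann n m k) = ⟨A, B, t⟩ then (1 : ℕ) else 0)
      = ∑ A : {A : Finset (ZMod (2 * n + k)) // A.card = n},
          (if sh g.1 A.1 = A.1 then (1 : ℕ) else 0) *
          ((∑ B : {B : Finset (ZMod (2 * m + k)) // B.card = m},
            if sh g.2 B.1 = B.1 then (1 : ℕ) else 0) *
            (if cst k g.1 = cst k g.2 then k else 0)) := by
        refine Finset.sum_congr rfl fun A _ => ?_
        rw [Finset.sum_congr rfl fun B _ => hAB A B]
        rw [← Finset.mul_sum, ← Finset.sum_mul]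
    _ = _ := by
        rw [← Finset.sum_mul, sum_subtype_indicator, sum_subtype_indicator]

lemma sum_over_j (i : ZMod (2 * n + k)) (hdn : addOrderOf i ∣ n) :
    (∑ j : ZMod (2 * m + k),
      ((if addOrderOf j ∣ m then ((2 * m + k) / addOrderOf j).choose (m / addOrderOf j)
          else 0)
        * (if cst k i = cst k j then k else 0)))
    = (if addOrderOf i ∣ m then ((2 * m + k) / addOrderOf i).choose (m / addOrderOf i)
        else 0) * k := by
  classical
  have hk0 : 0 < k := Nat.pos_of_ne_zero (NeZero.ne k)
  have hdN : addOrderOf i ∣ 2 * n + k := ord_dvd i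
  have hdk : addOrderOf i ∣ k := (Nat.dvd_add_right (Dvd.dvd.mul_left hdn 2)).mp hdN
  have hd0 : 0 < addOrderOf i := ord_pos i
  have hjk : ∀ j : ZMod (2 * m + k), addOrderOf j ∣ m → addOrderOf j ∣ k := by
    intro j hj
    exact (Nat.dvd_add_right (Dvd.dvd.mul_left hj 2)).mp (ord_dvd j)
  by_cases hdm : addOrderOf i ∣ m
  · have hdM : addOrderOf i ∣ 2 * m + k := Nat.dvd_add (Dvd.dvd.mul_left hdm 2) hdk
    have hult : i.val / ((2 * n + k) / addOrderOf i) < addOrderOf i := u_lt i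
    have hucop : Nat.Coprime (i.val / ((2 * n + k) / addOrderOf i)) (addOrderOf i) :=
      u_coprime i
    set u := i.val / ((2 * n + k) / addOrderOf i) with hu
    set j0 : ZMod (2 * m + k) :=
      ((u * ((2 * m + k) / addOrderOf i) : ℕ) : ZMod (2 * m + k)) with hj0
    obtain ⟨hj0ord, hj0val⟩ := j0_facts hdM hd0 hult hucop
    have hq0 : 0 < (2 * m + k) / addOrderOf i :=
      Nat.div_pos (Nat.le_of_dvd (by omega) hdM) hd0
    rw [Finset.sum_eq_single j0]
    · rw [hj0ord, if_pos hdm]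
      have hcst : cst k i = cst k j0 := by
        show ((k / addOrderOf i * u : ℕ) : ZMod k) = cst k j0
        unfold cst
        rw [hj0ord, hj0val, Nat.mul_div_cancel _ hq0]
      rw [if_pos hcst]
    · intro j _ hne
      by_cases hj : addOrderOf j ∣ m
      · by_cases hc : cst k i = cst k j
        · exfalso
          apply hne
          have hc' : ((k / addOrderOf i * u : ℕ) : ZMod k)
              = ((k / addOrderOf j * (j.val / ((2 * m + k) / addOrderOf j)) : ℕ) : ZMod k) :=
            hc
          obtain ⟨hd12, huv⟩ := cst_injective hk0 hdk (hjk j hj) hult (u_lt j) hucop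
            (u_coprime j) hc'
          have hjval : j.val = ((2 * m + k) / addOrderOf j)
              * (j.val / ((2 * m + k) / addOrderOf j)) :=
            (Nat.mul_div_cancel' (q_dvd_val j)).symm
          apply ZMod.val_injective
          rw [hj0val, hjval, ← huv, ← hd12, mul_comm]
        · rw [if_neg hc, mul_zero]
      · rw [if_neg hj, zero_mul]
    · intro h
      exact absurd (Finset.mem_univ j0) h
  · rw [if_neg hdm, zero_mul]
    apply Finset.sum_eq_zero
    intro j _
    by_cases hj : addOrderOf j ∣ m
    · by_cases hc : cst k i = cst k j
      · exfalso
        have hc' : ((k / addOrderOf i * (i.val / ((2 * n + k) / addOrderOf i)) : ℕ) : ZMod k)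
            = ((k / addOrderOf j * (j.val / ((2 * m + k) / addOrderOf j)) : ℕ) : ZMod k) :=
          hc
        obtain ⟨hd12, -⟩ := cst_injective hk0 hdk (hjk j hj) (u_lt i) (u_lt j)
          (u_coprime i) (u_coprime j) hc'
        rw [hd12] at hdm
        exact hdm hj
      · rw [if_neg hc, mul_zero]
    · rw [if_neg hj, zero_mul]

lemma total_sum :
    (∑ g : ZMod (2 * n + k) × ZMod (2 * m + k),
        Nat.card (AddAction.fixedBy (Ann n m k) g))
      = k * ∑ d ∈ (Nat.gcd (2 * n + k) (Nat.gcd n m)).divisors,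
          Nat.totient d * (((2 * n + k) / d).choose (n / d) *
            ((2 * m + k) / d).choose (m / d)) := by
  classical
  have step0 : (∑ g : ZMod (2 * n + k) × ZMod (2 * m + k),
      Nat.card (AddAction.fixedBy (Ann n m k) g))
      = ∑ i : ZMod (2 * n + k),
          ((if addOrderOf i ∣ n then ((2 * n + k) / addOrderOf i).choose (n / addOrderOf i)
              else 0) *
            ((if addOrderOf i ∣ m then ((2 * m + k) / addOrderOf i).choose (m / addOrderOf i)
                else 0) * k)) := by
    rw [Fintype.sum_prod_type]
    refine Finset.sum_congr rfl fun i _ => ?_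
    have hrw : ∀ j : ZMod (2 * m + k),
        Nat.card (AddAction.fixedBy (Ann n m k) (i, j))
          = (if addOrderOf i ∣ n then ((2 * n + k) / addOrderOf i).choose (n / addOrderOf i)
              else 0) *
            ((if addOrderOf j ∣ m then ((2 * m + k) / addOrderOf j).choose (m / addOrderOf j)
                else 0) * (if cst k i = cst k j then k else 0)) := by
      intro j
      rw [card_fix n m k (i, j), card_invSets i n, card_invSets j m]
    rw [Finset.sum_congr rfl fun j _ => hrw j]
    rw [← Finset.mul_sum]
    by_cases hdn : addOrderOf i ∣ n
    · congr 1
      exact sum_over_j n m k i hdn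
    · rw [if_neg hdn, zero_mul, zero_mul]
  rw [step0]
  have hmaps : ∀ i : ZMod (2 * n + k), i ∈ (univ : Finset (ZMod (2 * n + k))) →
      addOrderOf i ∈ (2 * n + k).divisors := by
    intro i _
    rw [Nat.mem_divisors]
    exact ⟨ord_dvd i, NeZero.ne _⟩
  rw [← Finset.sum_fiberwise_of_maps_to hmaps]
  have step2 : ∀ d ∈ (2 * n + k).divisors,
      (∑ i ∈ univ.filter fun i : ZMod (2 * n + k) => addOrderOf i = d,
        ((if addOrderOf i ∣ n then ((2 * n + k) / addOrderOf i).choose (n / addOrderOf i)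
            else 0) *
          ((if addOrderOf i ∣ m then ((2 * m + k) / addOrderOf i).choose (m / addOrderOf i)
              else 0) * k)))
      = Nat.totient d *
          ((if d ∣ n then ((2 * n + k) / d).choose (n / d) else 0) *
            ((if d ∣ m then ((2 * m + k) / d).choose (m / d) else 0) * k)) := by
    intro d hd
    rw [Finset.sum_congr rfl (fun i hi => by
      rw [(Finset.mem_filter.mp hi).2])]
    rw [Finset.sum_const, smul_eq_mul]
    congr 1
    have hdvd : d ∣ Fintype.card (ZMod (2 * n + k)) := by
      rw [ZMod.card]
      exact (Nat.mem_divisors.mp hd).1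
    exact IsAddCyclic.card_addOrderOf_eq_totient hdvd
  rw [Finset.sum_congr rfl step2]
  have step3 : (∑ d ∈ (2 * n + k).divisors,
      Nat.totient d *
        ((if d ∣ n then ((2 * n + k) / d).choose (n / d) else 0) *
          ((if d ∣ m then ((2 * m + k) / d).choose (m / d) else 0) * k)))
      = ∑ d ∈ (2 * n + k).divisors,
          (if d ∣ n ∧ d ∣ m then
            k * (Nat.totient d * (((2 * n + k) / d).choose (n / d) *
              ((2 * m + k) / d).choose (m / d)))
          else 0) := by
    refine Finset.sum_congr rfl fun d _ => ?_
    by_cases h1 : d ∣ n <;> by_cases h2 : d ∣ m <;> simp [h1, h2] <;> ring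
  rw [step3, ← Finset.sum_filter]
  have hset : ((2 * n + k).divisors.filter fun d => d ∣ n ∧ d ∣ m)
      = (Nat.gcd (2 * n + k) (Nat.gcd n m)).divisors := by
    ext d
    simp only [Finset.mem_filter, Nat.mem_divisors]
    constructor
    · rintro ⟨⟨h1, h2⟩, h3, h4⟩
      refine ⟨Nat.dvd_gcd h1 (Nat.dvd_gcd h3 h4), ?_⟩
      exact Nat.gcd_ne_zero_left h2
    · rintro ⟨h1, h2⟩
      have h3 := Nat.gcd_dvd_left (2 * n + k) (Nat.gcd n m)
      have h4 := Nat.gcd_dvd_right (2 * n + k) (Nat.gcd n m)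
      exact ⟨⟨h1.trans h3, NeZero.ne _⟩,
        ⟨h1.trans (h4.trans (Nat.gcd_dvd_left n m)),
          h1.trans (h4.trans (Nat.gcd_dvd_right n m))⟩⟩
  rw [hset, Finset.mul_sum]

end action

end AnnAux

theorem annular_formula_pos_integer (n m k : ℕ) (hk : 0 < k) :
    ∃ F : ℕ, 0 < F ∧
      F * ((2 * n + k) * (2 * m + k)) =
        k * ∑ d ∈ (Nat.gcd (2 * n + k) (Nat.gcd n m)).divisors,
          Nat.totient d * (Nat.choose ((2 * n + k) / d) (n / d) *
            Nat.choose ((2 * m + k) / d) (m / d)) := by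
  classical
  haveI : NeZero k := ⟨hk.ne'⟩
  set G := ZMod (2 * n + k) × ZMod (2 * m + k)
  haveI : ∀ a : G, Fintype (AddAction.fixedBy (AnnAux.Ann n m k) a) :=
    fun a => Fintype.ofFinite _
  haveI : Fintype (Quotient (AddAction.orbitRel G (AnnAux.Ann n m k))) :=
    Fintype.ofFinite _
  have hb := AddAction.sum_card_fixedBy_eq_card_orbits_mul_card_addGroup
    (G := G) (X := AnnAux.Ann n m k)
  have hb' : (∑ g : G, Nat.card (AddAction.fixedBy (AnnAux.Ann n m k) g))
      = Nat.card (Quotient (AddAction.orbitRel G (AnnAux.Ann n m k)))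
        * ((2 * n + k) * (2 * m + k)) := by
    rw [Finset.sum_congr rfl fun g _ => Nat.card_eq_fintype_card
      (α := AddAction.fixedBy (AnnAux.Ann n m k) g)]
    rw [hb, Nat.card_eq_fintype_card]
    congr 1
    rw [Fintype.card_prod, ZMod.card, ZMod.card]
  rw [AnnAux.total_sum n m k] at hb'
  refine ⟨Nat.card (Quotient (AddAction.orbitRel G (AnnAux.Ann n m k))), ?_, hb'.symm⟩
  have hrhs : 0 < k * ∑ d ∈ (Nat.gcd (2 * n + k) (Nat.gcd n m)).divisors,
      Nat.totient d * (Nat.choose ((2 * n + k) / d) (n / d) *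
        Nat.choose ((2 * m + k) / d) (m / d)) := by
    apply Nat.mul_pos hk
    have h1 : (1 : ℕ) ∈ (Nat.gcd (2 * n + k) (Nat.gcd n m)).divisors :=
      Nat.one_mem_divisors.mpr (Nat.gcd_ne_zero_left (by omega))
    refine lt_of_lt_of_le ?_ (Finset.single_le_sum (f := fun d =>
      Nat.totient d * (Nat.choose ((2 * n + k) / d) (n / d) *
        Nat.choose ((2 * m + k) / d) (m / d))) (fun _ _ => Nat.zero_le _) h1)
    simp only [Nat.totient_one, Nat.div_one, one_mul]
    exact Nat.mul_pos (Nat.choose_pos (by omega)) (Nat.choose_pos (by omega))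
  rw [hb'] at hrhs
  exact Nat.pos_of_ne_zero fun h0 => by rw [h0, zero_mul] at hrhs; exact lt_irrefl 0 hrhs
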